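/- For every real t > 0, the modified Bessel function satisfies I₀(t) ≤ 2e^t/√(πt). -/

import Mathlib

open Real MeasureTheory

/-- The modified Bessel function of the first kind of order `0`, via its integral
representation `I₀(t) = (1/π) ∫_{-1}^{1} (1-s²)^{-1/2} e^{-st} ds`. -/
noncomputable def besselI0 (t : ℝ) : ℝ :=
  (1 / π) * ∫ s in Set.Ioo (-1 : ℝ) 1, (1 - s ^ 2) ^ (-(1 : ℝ) / 2) * Real.exp (-(s * t))

lemma besselI0_key {t s : ℝ} (hs : 0 ≤ s) (h1 : 0 < 1 - s) :
    (1 - s ^ 2) ^ (-(1 : ℝ) / 2) * Real.exp (s * t) ≤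
      Real.exp t * ((1 - s) ^ (-(1 : ℝ) / 2) * Real.exp (-(t * (1 - s)))) := by
  have h2 : (1 : ℝ) ≤ 1 + s := by linarith
  have e1 : (1 - s ^ 2 : ℝ) = (1 - s) * (1 + s) := by ring
  rw [e1, Real.mul_rpow h1.le (by linarith)]
  have hb : (1 + s) ^ (-(1 : ℝ) / 2) ≤ 1 :=
    Real.rpow_le_one_of_one_le_of_nonpos h2 (by norm_num)
  have e2 : Real.exp t * Real.exp (-(t * (1 - s))) = Real.exp (s * t) := by
    rw [← Real.exp_add]; ring_nf
  calc (1 - s) ^ (-(1 : ℝ) / 2) * (1 + s) ^ (-(1 : ℝ) / 2) * Real.exp (s * t)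
      ≤ (1 - s) ^ (-(1 : ℝ) / 2) * 1 * Real.exp (s * t) := by
        have h3 := Real.rpow_nonneg (x := (1 - s)) h1.le (-(1 : ℝ) / 2)
        gcongr
    _ = Real.exp t * ((1 - s) ^ (-(1 : ℝ) / 2) * Real.exp (-(t * (1 - s)))) := by
        rw [mul_one, ← e2]; ring

theorem besselI0_bound (t : ℝ) (ht : 0 < t) :
    besselI0 t ≤ 2 * Real.exp t / Real.sqrt (π * t) := by
  set φ : ℝ → ℝ := fun u => u ^ (-(1 : ℝ) / 2) * Real.exp (-(t * u)) with hφdef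
  have hφnn : ∀ u : ℝ, 0 ≤ u → 0 ≤ φ u := fun u hu =>
    mul_nonneg (Real.rpow_nonneg hu _) (Real.exp_pos _).le
  -- integrability of φ on (0, ∞)
  have hφint : IntegrableOn φ (Set.Ioi 0) := by
    have h := integrableOn_rpow_mul_exp_neg_mul_rpow
      (p := 1) (s := -(1 : ℝ)/2) (b := t) (by norm_num) zero_lt_one ht
    refine h.congr_fun (fun x hx => ?_) measurableSet_Ioi
    simp [hφdef, Real.rpow_one]
  -- value of the integral of φ over (0, ∞)
  have hφval : ∫ u in Set.Ioi (0:ℝ), φ u = Real.sqrt π / Real.sqrt t := by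
    have h := Real.integral_rpow_mul_exp_neg_mul_Ioi (a := (1:ℝ)/2) (r := t)
      (by norm_num) ht
    have h2 : ∫ u in Set.Ioi (0:ℝ), φ u = ∫ u in Set.Ioi (0:ℝ),
        u ^ ((1:ℝ)/2 - 1) * Real.exp (-(t * u)) := by
      apply setIntegral_congr_fun measurableSet_Ioi
      intro x _; norm_num [hφdef]
    rw [h2, h, Real.Gamma_one_half_eq, ← Real.sqrt_eq_rpow, one_div, Real.sqrt_inv]
    field_simp
  have h02 : IntervalIntegrable φ volume 0 2 := by
    rw [intervalIntegrable_iff_integrableOn_Ioc_of_le (by norm_num)]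
    exact hφint.mono_set Set.Ioc_subset_Ioi_self
  have hg1 : IntervalIntegrable (fun s => φ (1 - s)) volume (-1) 1 := by
    have := h02.comp_sub_left 1
    norm_num at this
    exact this.symm
  have hg2 : IntervalIntegrable (fun s => φ (1 + s)) volume (-1) 1 := by
    have := h02.comp_add_left 1
    norm_num at this
    exact this
  set g : ℝ → ℝ := fun s => Real.exp t * (φ (1 - s) + φ (1 + s)) with hgdef
  have hgint : IntegrableOn g (Set.Ioo (-1:ℝ) 1) := by
    rw [← integrableOn_Ioc_iff_integrableOn_Ioo,
      ← intervalIntegrable_iff_integrableOn_Ioc_of_le (by norm_num : (-1:ℝ) ≤ 1)]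
    exact (hg1.add hg2).const_mul _
  -- pointwise bound
  have hle : ∀ s ∈ Set.Ioo (-1:ℝ) 1,
      (1 - s ^ 2) ^ (-(1 : ℝ) / 2) * Real.exp (-(s * t)) ≤ g s := by
    intro s hs
    obtain ⟨hs1, hs2⟩ := hs
    rcases le_or_gt 0 s with h | h
    · have step1 : (1 - s ^ 2) ^ (-(1 : ℝ) / 2) * Real.exp (-(s * t)) ≤
          (1 - s ^ 2) ^ (-(1 : ℝ) / 2) * Real.exp (s * t) :=
        mul_le_mul_of_nonneg_left (Real.exp_le_exp.2 (by nlinarith))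
          (Real.rpow_nonneg (by nlinarith) _)
      refine step1.trans ?_
      have := besselI0_key (t := t) h (by linarith)
      calc (1 - s ^ 2) ^ (-(1 : ℝ) / 2) * Real.exp (s * t)
          ≤ Real.exp t * ((1 - s) ^ (-(1 : ℝ) / 2) * Real.exp (-(t * (1 - s)))) := this
        _ ≤ g s := by
            have hnn : 0 ≤ φ (1 + s) := hφnn _ (by linarith)
            have : Real.exp t * φ (1 - s) + 0 ≤ Real.exp t * (φ (1 - s) + φ (1 + s)) := by
              have := (Real.exp_pos t).le
              nlinarith
            simpa [hgdef, hφdef, mul_add] using this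
    · have key := besselI0_key (t := t) (s := -s) (by linarith) (by linarith)
      have e1 : (1 - (-s) ^ 2 : ℝ) = 1 - s ^ 2 := by ring
      have e2 : (-s) * t = -(s * t) := by ring
      have e3 : (1 - -s : ℝ) = 1 + s := by ring
      rw [e1, e2, e3] at key
      refine key.trans ?_
      have hnn : 0 ≤ φ (1 - s) := hφnn _ (by linarith)
      have := (Real.exp_pos t).le
      have : 0 + Real.exp t * φ (1 + s) ≤ Real.exp t * (φ (1 - s) + φ (1 + s)) := by
        nlinarith
      simpa [hgdef, hφdef, mul_add] using this
  -- integral comparison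
  have hmono : (∫ s in Set.Ioo (-1:ℝ) 1, (1 - s ^ 2) ^ (-(1 : ℝ) / 2) * Real.exp (-(s * t)))
      ≤ ∫ s in Set.Ioo (-1:ℝ) 1, g s := by
    apply integral_mono_of_nonneg
    · refine ae_restrict_of_forall_mem measurableSet_Ioo fun s hs => ?_
      exact mul_nonneg (Real.rpow_nonneg (by nlinarith [hs.1, hs.2]) _) (Real.exp_pos _).le
    · exact hgint
    · exact ae_restrict_of_forall_mem measurableSet_Ioo hle
  -- value of the integral of g
  have hgval : (∫ s in Set.Ioo (-1:ℝ) 1, g s) ≤ Real.exp t * (2 * (Real.sqrt π / Real.sqrt t)) := by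
    have e0 : (∫ s in Set.Ioo (-1:ℝ) 1, g s) = ∫ s in (-1:ℝ)..1, g s := by
      rw [intervalIntegral.integral_of_le (by norm_num), integral_Ioc_eq_integral_Ioo]
    have e1 : (∫ s in (-1:ℝ)..1, g s)
        = Real.exp t * ((∫ s in (-1:ℝ)..1, φ (1 - s)) + ∫ s in (-1:ℝ)..1, φ (1 + s)) := by
      rw [hgdef]
      rw [intervalIntegral.integral_const_mul, intervalIntegral.integral_add hg1 hg2]
    have e2 : (∫ s in (-1:ℝ)..1, φ (1 - s)) = ∫ u in (0:ℝ)..2, φ u := by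
      rw [intervalIntegral.integral_comp_sub_left φ 1]
      norm_num
    have e3 : (∫ s in (-1:ℝ)..1, φ (1 + s)) = ∫ u in (0:ℝ)..2, φ u := by
      rw [intervalIntegral.integral_comp_add_left φ 1]
      norm_num
    have e4 : (∫ u in (0:ℝ)..2, φ u) ≤ Real.sqrt π / Real.sqrt t := by
      rw [← hφval, intervalIntegral.integral_of_le (by norm_num)]
      apply setIntegral_mono_set hφint
      · exact ae_restrict_of_forall_mem measurableSet_Ioi fun u hu => hφnn u (le_of_lt hu)
      · exact HasSubset.Subset.eventuallyLE Set.Ioc_subset_Ioi_self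
    rw [e0, e1, e2, e3]
    have := (Real.exp_pos t).le
    nlinarith
  -- put everything together
  have hπ : (0:ℝ) < π := Real.pi_pos
  have hsπ : (0:ℝ) < Real.sqrt π := Real.sqrt_pos.2 hπ
  have hst : (0:ℝ) < Real.sqrt t := Real.sqrt_pos.2 ht
  have hππ : Real.sqrt π * Real.sqrt π = π := Real.mul_self_sqrt hπ.le
  have hfinal : (1/π) * (Real.exp t * (2 * (Real.sqrt π / Real.sqrt t)))
      = 2 * Real.exp t / Real.sqrt (π * t) := by
    rw [Real.sqrt_mul hπ.le]
    field_simp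
    linear_combination hππ
  calc besselI0 t
      ≤ (1/π) * ∫ s in Set.Ioo (-1:ℝ) 1, g s :=
        mul_le_mul_of_nonneg_left hmono (by positivity)
    _ ≤ (1/π) * (Real.exp t * (2 * (Real.sqrt π / Real.sqrt t))) :=
        mul_le_mul_of_nonneg_left hgval (by positivity)
    _ = 2 * Real.exp t / Real.sqrt (π * t) := hfinal
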